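/- Graded Nakayama's lemma: Let R be a commutative G-graded ring, let M be a finitely generated G-graded R-module, and let 𝔞 be a homogeneous ideal of R contained in the homogeneous Jacobson radical of R (the intersection of all maximal homogeneous ideals). If 𝔞M = M, then M = 0. -/

import Mathlib

/-- Homogeneous component of a scalar multiple of a homogeneous element. -/
theorem aux_decompose_smul {G R M : Type*} [AddCommGroup G] [DecidableEq G] [CommRing R]
    (𝒜 : G → AddSubgroup R) [GradedRing 𝒜]
    [AddCommGroup M] [Module R M] (ℳ : G → AddSubgroup M)
    [DirectSum.Decomposition ℳ] [SetLike.GradedSMul 𝒜 ℳ]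
    (a : R) {m : M} {h : G} (hm : m ∈ ℳ h) (k : G) :
    (DirectSum.decompose ℳ (a • m) k : M) = (DirectSum.decompose 𝒜 a (k - h) : R) • m := by
  classical
  conv_lhs => rw [← DirectSum.sum_support_decompose 𝒜 a, Finset.sum_smul]
  rw [DirectSum.decompose_sum, DFinsupp.finset_sum_apply, AddSubmonoidClass.coe_finset_sum]
  have step : ∀ g ∈ DFinsupp.support (DirectSum.decompose 𝒜 a),
      (DirectSum.decompose ℳ ((DirectSum.decompose 𝒜 a g : R) • m) k : M)
        = if g = k - h then (DirectSum.decompose 𝒜 a g : R) • m else 0 := by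
    intro g _
    have hmem : (DirectSum.decompose 𝒜 a g : R) • m ∈ ℳ (g +ᵥ h) :=
      SetLike.GradedSMul.smul_mem (SetLike.coe_mem _) hm
    rw [vadd_eq_add] at hmem
    by_cases hgk : g = k - h
    · rw [if_pos hgk]
      subst hgk
      have hkk : k - h + h = k := sub_add_cancel k h
      rw [hkk] at hmem
      exact DirectSum.decompose_of_mem_same ℳ hmem
    · rw [if_neg hgk]
      refine DirectSum.decompose_of_mem_ne ℳ hmem ?_
      intro hcon
      exact hgk (eq_sub_of_add_eq hcon)
  rw [Finset.sum_congr rfl step, Finset.sum_ite_eq' _ (k - h)]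
  by_cases hs : k - h ∈ DFinsupp.support (DirectSum.decompose 𝒜 a)
  · rw [if_pos hs]
  · rw [if_neg hs]
    rw [DFinsupp.notMem_support_iff] at hs
    rw [hs]
    simp

/-- If a degree-zero element lies in every maximal homogeneous ideal (via `hrad` applied to
the ideal `𝔞` containing it), then `1 - b` is a unit. -/
theorem aux_isUnit {G R : Type*} [AddCommGroup G] [DecidableEq G] [CommRing R]
    (𝒜 : G → AddSubgroup R) [GradedRing 𝒜]
    (𝔞 : Ideal R)
    (hrad : ∀ J : Ideal R, Ideal.IsHomogeneous 𝒜 J → J ≠ ⊤ →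
      (∀ K : Ideal R, Ideal.IsHomogeneous 𝒜 K → K ≠ ⊤ → J ≤ K → K = J) → 𝔞 ≤ J)
    {b : R} (hb0 : b ∈ 𝒜 0) (hb𝔞 : b ∈ 𝔞) : IsUnit (1 - b) := by
  rw [← Ideal.span_singleton_eq_top]
  by_contra hne
  have hhom : (Ideal.span {1 - b}).IsHomogeneous 𝒜 := by
    refine Ideal.homogeneous_span 𝒜 _ ?_
    rintro x hx
    rw [Set.mem_singleton_iff] at hx
    subst hx
    exact ⟨0, sub_mem (SetLike.one_mem_graded 𝒜) hb0⟩
  have hchain : ∀ c ⊆ {J : Ideal R | J.IsHomogeneous 𝒜 ∧ J ≠ ⊤}, IsChain (· ≤ ·) c →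
      ∀ y ∈ c, ∃ ub ∈ {J : Ideal R | J.IsHomogeneous 𝒜 ∧ J ≠ ⊤}, ∀ z ∈ c, z ≤ ub := by
    intro c hcs hchain y hyc
    refine ⟨sSup c, ⟨Ideal.IsHomogeneous.sSup (fun I hI => (hcs hI).1), ?_⟩,
      fun z hz => le_sSup hz⟩
    intro htop
    have h1 : (1 : R) ∈ sSup c := htop ▸ Submodule.mem_top
    obtain ⟨J, hJc, hJ1⟩ :=
      (Submodule.mem_sSup_of_directed ⟨y, hyc⟩ hchain.directedOn).1 h1
    exact (hcs hJc).2 (Ideal.eq_top_of_isUnit_mem _ hJ1 isUnit_one)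
  obtain ⟨m, hle, hmax⟩ := zorn_le_nonempty₀ {J : Ideal R | J.IsHomogeneous 𝒜 ∧ J ≠ ⊤}
    hchain _ ⟨hhom, hne⟩
  have h𝔞m : 𝔞 ≤ m := by
    refine hrad m hmax.1.1 hmax.1.2 ?_
    intro K hK hKne hmK
    exact le_antisymm (hmax.2 ⟨hK, hKne⟩ hmK) hmK
  have h1m : (1 : R) ∈ m := by
    have hbm : b ∈ m := h𝔞m hb𝔞
    have hsb : (1 - b : R) ∈ m := hle (Ideal.subset_span rfl)
    have := m.add_mem hsb hbm
    simpa using this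
  exact hmax.1.2 (Ideal.eq_top_of_isUnit_mem _ h1m isUnit_one)

/-- **Graded Nakayama's lemma.** Let `R` be a commutative `G`-graded ring, `M` a finitely
generated `G`-graded `R`-module, and `𝔞` a homogeneous ideal of `R` contained in the
homogeneous Jacobson radical of `R` (i.e. contained in every maximal homogeneous ideal).
If `𝔞 • M = M`, then `M = 0`. -/
theorem graded_nakayama {G R M : Type*} [AddCommGroup G] [DecidableEq G] [CommRing R]
    (𝒜 : G → AddSubgroup R) [GradedRing 𝒜]
    [AddCommGroup M] [Module R M] (ℳ : G → AddSubgroup M)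
    [DirectSum.Decomposition ℳ] [SetLike.GradedSMul 𝒜 ℳ]
    [Module.Finite R M]
    (𝔞 : Ideal R) (h𝔞 : Ideal.IsHomogeneous 𝒜 𝔞)
    (hrad : ∀ J : Ideal R, Ideal.IsHomogeneous 𝒜 J → J ≠ ⊤ →
      (∀ K : Ideal R, Ideal.IsHomogeneous 𝒜 K → K ≠ ⊤ → J ≤ K → K = J) → 𝔞 ≤ J)
    (hM : 𝔞 • (⊤ : Submodule R M) = ⊤) :
    Subsingleton M := by
  classical
  have key : ∀ (n : ℕ) (s : Finset M), s.card = n → (∀ m ∈ s, SetLike.IsHomogeneousElem ℳ m) →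
      Submodule.span R (s : Set M) = ⊤ → ∀ x : M, x = 0 := by
    intro n
    induction n with
    | zero =>
      intro s hcard _ hspan x
      rw [Finset.card_eq_zero] at hcard
      subst hcard
      have hx : x ∈ (⊤ : Submodule R M) := Submodule.mem_top
      rw [← hspan] at hx
      simpa using hx
    | succ n ih =>
      intro s hcard hhom hspan x
      obtain ⟨m, hm⟩ : s.Nonempty := Finset.card_pos.mp (by omega)
      suffices hst : m ∈ Submodule.span R ((s.erase m : Finset M) : Set M) by
        have hspan' : Submodule.span R ((s.erase m : Finset M) : Set M) = ⊤ := by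
          rw [eq_top_iff, ← hspan, Submodule.span_le]
          intro y hy
          by_cases hym : y = m
          · subst hym; exact hst
          · exact Submodule.subset_span (Finset.mem_erase.mpr ⟨hym, hy⟩)
        refine ih (s.erase m) ?_ (fun y hy => hhom y (Finset.mem_of_mem_erase hy)) hspan' x
        rw [Finset.card_erase_of_mem hm, hcard]
        omega
      -- choose degrees
      set d : M → G := fun i => if h : SetLike.IsHomogeneousElem ℳ i then h.choose else 0 with hd_def
      have hd : ∀ i ∈ s, i ∈ ℳ (d i) := by
        intro i hi
        have h := hhom i hi
        simp only [hd_def, dif_pos h]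
        exact h.choose_spec
      have hmg : m ∈ ℳ (d m) := hd m hm
      -- write m as an 𝔞-combination of the generators
      have hmem : m ∈ 𝔞 • Submodule.span R (Set.range ((↑) : {x // x ∈ s} → M)) := by
        have hrange : Set.range ((↑) : {x // x ∈ s} → M) = (s : Set M) :=
          Subtype.range_coe_subtype
        rw [hrange, hspan, hM]
        exact Submodule.mem_top
      rw [Submodule.mem_ideal_smul_span_iff_exists_sum] at hmem
      obtain ⟨c, hc, hsum⟩ := hmem
      have hsum' : ∑ i : {x // x ∈ s}, c i • (i : M) = m := by
        rw [← hsum]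
        exact (Finsupp.sum_fintype c (fun i r => r • (i : M)) (fun i => zero_smul R _)).symm
      -- project onto degree d m
      have hme : m = ∑ i : {x // x ∈ s},
          (DirectSum.decompose 𝒜 (c i) (d m - d i) : R) • (i : M) := by
        have h1 : (DirectSum.decompose ℳ (∑ i : {x // x ∈ s}, c i • (i : M)) (d m) : M)
            = (DirectSum.decompose ℳ m (d m) : M) := by rw [hsum']
        rw [DirectSum.decompose_sum, DFinsupp.finset_sum_apply,
          AddSubmonoidClass.coe_finset_sum, DirectSum.decompose_of_mem_same ℳ hmg] at h1
        conv_lhs => rw [← h1]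
        exact Finset.sum_congr rfl fun i _ =>
          aux_decompose_smul 𝒜 ℳ (c i) (hd i i.2) (d m)
      set i₀ : {x // x ∈ s} := ⟨m, hm⟩ with hi₀
      set e₀ : R := (DirectSum.decompose 𝒜 (c i₀) (d m - d m) : R) with he₀
      have hsplit : m = e₀ • m + ∑ i ∈ Finset.univ.erase i₀,
          (DirectSum.decompose 𝒜 (c i) (d m - d i) : R) • (i : M) := by
        conv_lhs => rw [hme]
        exact (Finset.add_sum_erase _ _ (Finset.mem_univ i₀)).symm
      have he0 : e₀ ∈ 𝒜 0 := by
        have : e₀ ∈ 𝒜 (d m - d m) := SetLike.coe_mem _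
        rwa [sub_self] at this
      have he𝔞 : e₀ ∈ 𝔞 := h𝔞 (d m - d m) (hc i₀)
      have hrest : (1 - e₀) • m ∈ Submodule.span R ((s.erase m : Finset M) : Set M) := by
        have heq : (1 - e₀) • m = ∑ i ∈ Finset.univ.erase i₀,
            (DirectSum.decompose 𝒜 (c i) (d m - d i) : R) • (i : M) := by
          rw [sub_smul, one_smul, sub_eq_iff_eq_add']
          exact hsplit
        rw [heq]
        refine Submodule.sum_mem _ fun i hi => Submodule.smul_mem _ _ (Submodule.subset_span ?_)
        refine Finset.mem_coe.mpr (Finset.mem_erase.mpr ⟨?_, i.2⟩)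
        intro hcon
        exact (Finset.mem_erase.mp hi).1 (Subtype.ext hcon)
      obtain ⟨u, hu⟩ := aux_isUnit 𝒜 𝔞 hrad he0 he𝔞
      have hmval : m = (↑u⁻¹ : R) • ((1 - e₀) • m) := by
        rw [← hu, ← mul_smul, Units.inv_mul, one_smul]
      have hfin := Submodule.smul_mem (Submodule.span R ((s.erase m : Finset M) : Set M))
        ((↑u⁻¹ : R)) hrest
      rwa [← hmval] at hfin
  -- produce a finite homogeneous generating set
  obtain ⟨s₀, hs₀⟩ := Module.Finite.fg_top (R := R) (M := M)
  have hhomspan : ∀ x : M, x ∈ Submodule.span R {m : M | SetLike.IsHomogeneousElem ℳ m} := by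
    intro x
    rw [← DirectSum.sum_support_decompose ℳ x]
    exact Submodule.sum_mem _ fun i _ => Submodule.subset_span ⟨i, SetLike.coe_mem _⟩
  choose T hT1 hT2 using fun x : M => Submodule.mem_span_finite_of_mem_span (hhomspan x)
  set s : Finset M := s₀.biUnion T with hs_def
  have hshom : ∀ m ∈ s, SetLike.IsHomogeneousElem ℳ m := by
    intro m hmem
    obtain ⟨x, _, hx⟩ := Finset.mem_biUnion.mp hmem
    exact hT1 x (Finset.mem_coe.mpr hx)
  have hsspan : Submodule.span R (s : Set M) = ⊤ := by
    rw [eq_top_iff, ← hs₀, Submodule.span_le]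
    intro x hx
    refine Submodule.span_mono ?_ (hT2 x)
    intro y hy
    exact Finset.mem_coe.mpr (Finset.mem_biUnion.mpr ⟨x, hx, Finset.mem_coe.mp hy⟩)
  exact subsingleton_of_forall_eq 0 fun x => key s.card s rfl hshom hsspan x
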